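/- (Robustness verification for Mahalanobis K-NN, binary case.) Let {(x_i, y_i)}_{i ∈ T} be a finite family of points x_i ∈ ℝ^D with binary labels y_i, let (x, y_t) be a test instance, let M ∈ ℝ^{D×D} be a symmetric positive semidefinite matrix with M(x_i − x_j) ≠ 0 for all i with y_i = y_t and all j with y_j ≠ y_t, let K = 2k − 1 be odd, and assume |{i ∈ T : y_i = y_t}| ≥ k. Suppose δ ∈ ℝ^D is such that there exists N ⊆ T with |N| = K satisfying d_M(x + δ, x_n) ≤ d_M(x + δ, x_m) for all n ∈ N, m ∈ T \ N, and |{n ∈ N : y_n = y_t}| ≤ k − 1 (so the Mahalanobis K-NN classifier misclassifies x + δ). Then ‖δ‖₂ ≥ kthmin over j ∈ {j : y_j ≠ y_t} of (kthmax over i ∈ {i : y_i = y_t} of ε̃(x_i, x_j, x; M)), where kthmax and kthmin select the k-th largest and k-th smallest values respectively. -/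

import Mathlib

open Matrix

/-- Mahalanobis (squared) distance `d_M(x, x') = (x - x')ᵀ M (x - x')`. -/
noncomputable def mah {D : ℕ} (M : Matrix (Fin D) (Fin D) ℝ) (x x' : Fin D → ℝ) : ℝ :=
  (x - x') ⬝ᵥ M.mulVec (x - x')

/-- Euclidean norm `‖v‖₂` on `Fin D → ℝ`. -/
noncomputable def eucNorm {D : ℕ} (v : Fin D → ℝ) : ℝ :=
  Real.sqrt (v ⬝ᵥ v)


/-- The `k`-th largest value (1-indexed) of `f` over the finite set `S`:
the `k`-th element of the values of `f` on `S` (with multiplicity) sorted in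
nonincreasing order. -/
noncomputable def kthmax {α : Type*} (S : Finset α) (f : α → ℝ) (k : ℕ) : ℝ :=
  ((S.val.map f).sort (· ≤ ·)).getD (S.card - k) 0

/-- The `k`-th smallest value (1-indexed) of `g` over the finite set `T`:
the `k`-th element of the values of `g` on `T` (with multiplicity) sorted in
nondecreasing order. -/
noncomputable def kthmin {α : Type*} (T : Finset α) (g : α → ℝ) (k : ℕ) : ℝ :=
  ((T.val.map g).sort (· ≤ ·)).getD (k - 1) 0


/-- `ε̃(x⁺, x⁻, x; M) = (d_M(x, x⁻) − d_M(x, x⁺)) / (2‖M(x⁺ − x⁻)‖₂)`. -/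
noncomputable def epsTilde {D : ℕ} (M : Matrix (Fin D) (Fin D) ℝ) (xp xm x : Fin D → ℝ) : ℝ :=
  (mah M x xm - mah M x xp) / (2 * eucNorm (M.mulVec (xp - xm)))



section Helpers

lemma sorted_getD_le (l : List ℝ) (hs : l.Pairwise (· ≤ ·)) (n : ℕ) (hn : n < l.length)
    (c : ℝ) (hcount : l.countP (fun a => decide (c < a)) + n + 1 ≤ l.length) :
    l.getD n 0 ≤ c := by
  by_contra hlt
  push_neg at hlt
  rw [List.getD_eq_getElem _ _ hn] at hlt
  have hdrop : ∀ a ∈ l.drop n, c < a := by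
    intro a ha
    obtain ⟨i, hi, rfl⟩ := List.mem_iff_getElem.mp ha
    rw [List.length_drop] at hi
    rw [List.getElem_drop]
    rcases Nat.eq_zero_or_pos i with h0 | h0
    · subst h0; simpa using hlt
    · exact lt_of_lt_of_le hlt
        (List.pairwise_iff_getElem.mp hs n (n + i) hn (by omega) (by omega))
  have h1 : (l.drop n).countP (fun a => decide (c < a)) = (l.drop n).length :=
    List.countP_eq_length.mpr (fun a ha => by simpa using hdrop a ha)
  have h2 : l.countP (fun a => decide (c < a)) =
      (l.take n).countP (fun a => decide (c < a)) +
      (l.drop n).countP (fun a => decide (c < a)) := by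
    rw [← List.countP_append, List.take_append_drop]
  have h3 : (l.take n).countP (fun a => decide (c < a)) ≤ n := by
    refine le_trans List.countP_le_length ?_
    simp [List.length_take]
  rw [List.length_drop] at h1
  omega

lemma countP_sort_map {α : Type*} (S : Finset α) (g : α → ℝ) (p : ℝ → Prop) [DecidablePred p] :
    ((S.val.map g).sort (· ≤ ·)).countP (fun a => decide (p a)) =
      (S.filter (fun a => p (g a))).card := by
  rw [← Multiset.coe_countP, Multiset.sort_eq, Multiset.countP_map]
  rfl

lemma length_sort_map {α : Type*} (S : Finset α) (g : α → ℝ) :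
    ((S.val.map g).sort (· ≤ ·)).length = S.card := by
  rw [Multiset.length_sort, Multiset.card_map]; rfl

lemma kthmin_le {α : Type*} (S : Finset α) (g : α → ℝ) (k : ℕ) (hk : 1 ≤ k) (c : ℝ)
    [DecidablePred (fun a => g a ≤ c)]
    (h : k ≤ (S.filter fun a => g a ≤ c).card) : kthmin S g k ≤ c := by
  have hlen := length_sort_map S g
  have hcard : k ≤ S.card := le_trans h (Finset.card_filter_le _ _)
  apply sorted_getD_le _ (Multiset.pairwise_sort _ _) _ (by omega)
  rw [countP_sort_map S g (fun a => c < a), hlen]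
  have hsplit := Finset.card_filter_add_card_filter_not (s := S)
    (p := fun a => g a ≤ c)
  simp only [not_le] at hsplit
  omega

lemma kthmax_le {α : Type*} (S : Finset α) (g : α → ℝ) (k : ℕ) (hk : 1 ≤ k) (c : ℝ)
    [DecidablePred (fun a => c < g a)]
    (hcard : k ≤ S.card)
    (h : (S.filter fun a => c < g a).card ≤ k - 1) : kthmax S g k ≤ c := by
  have hlen := length_sort_map S g
  apply sorted_getD_le _ (Multiset.pairwise_sort _ _) _ (by omega)
  rw [countP_sort_map S g (fun a => c < a), hlen]
  have h' : (@Finset.filter _ (fun a => c < g a) (fun a => Real.decidableLT c (g a)) S).card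
      ≤ k - 1 := by convert h using 2; congr!
  omega

lemma eps_le {D : ℕ} (M : Matrix (Fin D) (Fin D) ℝ) (hM : M.PosSemidef)
    (xp xm x δ : Fin D → ℝ) (hne : M.mulVec (xp - xm) ≠ 0)
    (h : mah M (x + δ) xm ≤ mah M (x + δ) xp) :
    epsTilde M xp xm x ≤ eucNorm δ := by
  have hsymm : Mᵀ = M := by
    have := hM.isHermitian.eq
    simpa using this
  have hsym : ∀ u v : Fin D → ℝ, u ⬝ᵥ M.mulVec v = v ⬝ᵥ M.mulVec u := by
    intro u v
    rw [Matrix.dotProduct_mulVec, ← Matrix.mulVec_transpose, hsymm, dotProduct_comm]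
  have key : ∀ z : Fin D → ℝ, mah M (x + δ) z =
      mah M x z + 2 * (δ ⬝ᵥ M.mulVec (x - z)) + δ ⬝ᵥ M.mulVec δ := by
    intro z
    have e : x + δ - z = (x - z) + δ := by abel
    rw [mah, e, mah]
    rw [Matrix.mulVec_add, add_dotProduct, dotProduct_add,
      dotProduct_add]
    linear_combination hsym (x - z) δ
  set v := M.mulVec (xp - xm) with hv
  have hstep : mah M x xm - mah M x xp ≤ 2 * (-(δ ⬝ᵥ v)) := by
    have h1 := key xm
    have h2 := key xp
    have hdiff : δ ⬝ᵥ M.mulVec (x - xp) - δ ⬝ᵥ M.mulVec (x - xm) = -(δ ⬝ᵥ v) := by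
      rw [← dotProduct_sub, ← Matrix.mulVec_sub]
      have e : x - xp - (x - xm) = -(xp - xm) := by abel
      rw [e, Matrix.mulVec_neg, dotProduct_neg]
    nlinarith [h, h1, h2]
  have hcs : (δ ⬝ᵥ v) ^ 2 ≤ (δ ⬝ᵥ δ) * (v ⬝ᵥ v) := by
    have := Finset.sum_mul_sq_le_sq_mul_sq Finset.univ δ v
    simpa [dotProduct, sq] using this
  have hδ0 : 0 ≤ δ ⬝ᵥ δ := Finset.sum_nonneg fun i _ => mul_self_nonneg _
  have hv0 : 0 < v ⬝ᵥ v := by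
    rcases lt_or_eq_of_le (Finset.sum_nonneg fun i _ => mul_self_nonneg (v i)) with h' | h'
    · exact h'
    · exact absurd ((dotProduct_self_eq_zero).mp h'.symm) hne
  have hnδ : eucNorm δ ^ 2 = δ ⬝ᵥ δ := Real.sq_sqrt hδ0
  have hnv : eucNorm v ^ 2 = v ⬝ᵥ v := Real.sq_sqrt hv0.le
  have hnδ0 : 0 ≤ eucNorm δ := Real.sqrt_nonneg _
  have hnv0 : 0 < eucNorm v := Real.sqrt_pos.mpr hv0
  have hcs2 : -(δ ⬝ᵥ v) ≤ eucNorm δ * eucNorm v := by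
    have hsq : (-(δ ⬝ᵥ v)) ^ 2 ≤ (eucNorm δ * eucNorm v) ^ 2 := by
      rw [mul_pow, hnδ, hnv]; simpa using hcs
    exact le_of_pow_le_pow_left₀ two_ne_zero (by positivity) hsq
  rw [epsTilde, div_le_iff₀ (by positivity)]
  nlinarith [hstep, hcs2]

end Helpers

/-- Robustness verification for Mahalanobis K-NN, binary case: if the
Mahalanobis `K`-NN classifier (`K = 2k − 1`) misclassifies `x + δ`, i.e. some
`K`-nearest-neighbor set of `x + δ` contains at most `k − 1` points with label `y_t`, then
`‖δ‖₂ ≥ kthmin_{j : y_j ≠ y_t} kthmax_{i : y_i = y_t} ε̃(x_i, x_j, x; M)`. -/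
theorem knn_robustness_verification {D : ℕ} {ι : Type*} [DecidableEq ι]
    (T : Finset ι) (xs : ι → Fin D → ℝ) (y : ι → Bool) (x : Fin D → ℝ) (yt : Bool)
    (M : Matrix (Fin D) (Fin D) ℝ) (hM : M.PosSemidef)
    (hMx : ∀ i ∈ T, ∀ j ∈ T, y i = yt → y j ≠ yt → M.mulVec (xs i - xs j) ≠ 0)
    (k K : ℕ) (hk : 1 ≤ k) (hK : K = 2 * k - 1)
    (hsame : k ≤ (T.filter fun i => y i = yt).card)
    (δ : Fin D → ℝ) (N : Finset ι) (hNT : N ⊆ T) (hNcard : N.card = K)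
    (hnear : ∀ n ∈ N, ∀ m ∈ T \ N, mah M (x + δ) (xs n) ≤ mah M (x + δ) (xs m))
    (hmaj : (N.filter fun n => y n = yt).card ≤ k - 1) :
    kthmin (T.filter fun j => y j ≠ yt)
        (fun j => kthmax (T.filter fun i => y i = yt)
          (fun i => epsTilde M (xs i) (xs j) x) k) k ≤ eucNorm δ := by
  classical
  have hNd : k ≤ (N.filter fun n => y n ≠ yt).card := by
    have hsplit := Finset.card_filter_add_card_filter_not (s := N)
      (p := fun n => y n = yt)
    simp only [ne_eq, Finset.filter_congr_decidable] at *
    omega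
  have hje : ∀ j ∈ N, y j ≠ yt →
      kthmax (T.filter fun i => y i = yt) (fun i => epsTilde M (xs i) (xs j) x) k ≤
        eucNorm δ := by
    intro j hjN hjy
    apply kthmax_le _ _ _ hk _ hsame
    have hsub : ((T.filter fun i => y i = yt).filter
        fun i => eucNorm δ < epsTilde M (xs i) (xs j) x) ⊆
        N.filter fun n => y n = yt := by
      intro i hi
      rw [Finset.mem_filter, Finset.mem_filter] at hi
      obtain ⟨⟨hiT, hiy⟩, heps⟩ := hi
      by_contra hiN'
      have hiN : i ∉ N := fun h' => hiN' (Finset.mem_filter.mpr ⟨h', hiy⟩)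
      have hnear' := hnear j hjN i (Finset.mem_sdiff.mpr ⟨hiT, hiN⟩)
      exact absurd (eps_le M hM (xs i) (xs j) x δ (hMx i hiT j (hNT hjN) hiy hjy) hnear')
        (not_le.mpr heps)
    refine le_trans (le_trans (Finset.card_le_card hsub) ?_) hmaj
    apply le_of_eq
    congr!
  apply kthmin_le _ _ _ hk
  refine le_trans hNd (le_trans (Finset.card_le_card ?_) (le_of_eq (by congr!)))
  intro j hj
  rw [Finset.mem_filter] at hj
  exact Finset.mem_filter.mpr ⟨Finset.mem_filter.mpr ⟨hNT hj.1, hj.2⟩, hje j hj.1 hj.2⟩
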